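/- In the Max-Min Round Robin analysis, if the issues are ordered a_1,…,a_m in decreasing order of β_i(·) and an agent takes the β_i-worst available issue in each of her p rounds (issues a_n, a_{2n}, …, a_{pn}), then her value satisfies V_i(π) − Σ_{a∈A} V_i^min(a) ≥ Σ_{k=1}^{p} β_i(a_{kn}); moreover β_i(a_1) + Σ_{k=1}^{p} β_i(a_{kn}) ≥ (1/n)Σ_{a∈A} β_i(a). -/

import Mathlib

open Finset

noncomputable section

/-- In the Max-Min Round Robin analysis for a fixed agent `i` with
`m = p·n + q` issues (`1 ≤ q ≤ n`), suppose the issues `a_1, …, a_m` (0-indexed below as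
`Fin (p*n+q)`) are ordered in decreasing order of `β = V^max − V^min`, with the
convention that `β` is `0` beyond position `m`.  If the agent receives her maximum value
on each of the issues `a_n, a_{2n}, …, a_{pn}` (the β-worst available issue in each of
her `p` rounds), then her value satisfies
`V_i(π) − Σ_a V_i^min(a) ≥ Σ_{k=1}^p β(a_{kn})`; moreover
`β(a_1) + Σ_{k=1}^p β(a_{kn}) ≥ (1/n)·Σ_a β(a)`. -/
theorem max_min_round_robin_analysis {n p q : ℕ} (hn : 0 < n) (hq1 : 1 ≤ q) (hq2 : q ≤ n)
    (C : Fin (p * n + q) → Type*) [∀ a, Fintype (C a)] [∀ a, Nonempty (C a)]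
    (V : (a : Fin (p * n + q)) → C a → ℝ)
    (Vmax Vmin : Fin (p * n + q) → ℝ)
    (hVmax : ∀ a, Vmax a = univ.sup' univ_nonempty (V a))
    (hVmin : ∀ a, Vmin a = univ.inf' univ_nonempty (V a))
    (β : ℕ → ℝ)
    (hβ : ∀ (t : ℕ) (h : t < p * n + q), β t = Vmax ⟨t, h⟩ - Vmin ⟨t, h⟩)
    (hβ0 : ∀ t : ℕ, p * n + q ≤ t → β t = 0)
    (hsorted : ∀ s t : ℕ, s ≤ t → β t ≤ β s)
    (π : (a : Fin (p * n + q)) → C a)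
    (hpick : ∀ (k : ℕ), 1 ≤ k → k ≤ p → ∀ h : k * n - 1 < p * n + q,
      V ⟨k * n - 1, h⟩ (π ⟨k * n - 1, h⟩) = Vmax ⟨k * n - 1, h⟩) :
    (∑ k ∈ Finset.Icc 1 p, β (k * n - 1) ≤ (∑ a, V a (π a)) - ∑ a, Vmin a) ∧
      (1 / (n : ℝ)) * ∑ a : Fin (p * n + q), (Vmax a - Vmin a) ≤
        β 0 + ∑ k ∈ Finset.Icc 1 p, β (k * n - 1) := by
  have hm : 0 < p * n + q := by omega
  have hminle : ∀ a, Vmin a ≤ V a (π a) := fun a => by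
    rw [hVmin a]; exact inf'_le _ (mem_univ _)
  have hminmax : ∀ a, Vmin a ≤ Vmax a := fun a => by
    rw [hVmin a, hVmax a]
    exact le_trans (inf'_le _ (mem_univ (Classical.arbitrary (C a)))) (le_sup' _ (mem_univ _))
  have hlt : ∀ k, 1 ≤ k → k ≤ p → k * n - 1 < p * n + q := by
    intro k hk1 hkp
    have h1 : k * n ≤ p * n := Nat.mul_le_mul_right n hkp
    have h2 : n ≤ k * n := by calc n = 1 * n := (one_mul n).symm
                                  _ ≤ k * n := Nat.mul_le_mul_right n hk1
    omega
  -- the embedding of indices k*n-1 into Fin (p*n+q)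
  set e : ℕ → Fin (p * n + q) := fun t =>
    if h : t < p * n + q then ⟨t, h⟩ else ⟨0, hm⟩ with he
  have heval : ∀ k ∈ Finset.Icc 1 p,
      β (k * n - 1) = V (e (k * n - 1)) (π (e (k * n - 1))) - Vmin (e (k * n - 1)) := by
    intro k hk
    rw [Finset.mem_Icc] at hk
    have h := hlt k hk.1 hk.2
    have hek : e (k * n - 1) = ⟨k * n - 1, h⟩ := by simp only [he, dif_pos h]
    rw [hek, hβ _ h, hpick k hk.1 hk.2 h]
  constructor
  · -- Part 1
    rw [← Finset.sum_sub_distrib]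
    calc ∑ k ∈ Finset.Icc 1 p, β (k * n - 1)
        = ∑ k ∈ Finset.Icc 1 p, (V (e (k * n - 1)) (π (e (k * n - 1))) - Vmin (e (k * n - 1))) :=
          Finset.sum_congr rfl heval
      _ = ∑ a ∈ (Finset.Icc 1 p).image (fun k => e (k * n - 1)), (V a (π a) - Vmin a) := by
          rw [Finset.sum_image]
          intro x hx y hy hxy
          rw [Finset.mem_coe, Finset.mem_Icc] at hx hy
          have hxlt := hlt x hx.1 hx.2
          have hylt := hlt y hy.1 hy.2
          simp only [he, dif_pos hxlt, dif_pos hylt, Fin.mk.injEq] at hxy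
          have hxn : n ≤ x * n := by calc n = 1 * n := (one_mul n).symm
                                          _ ≤ x * n := Nat.mul_le_mul_right n hx.1
          have hyn : n ≤ y * n := by calc n = 1 * n := (one_mul n).symm
                                          _ ≤ y * n := Nat.mul_le_mul_right n hy.1
          have : x * n = y * n := by omega
          exact Nat.eq_of_mul_eq_mul_right hn this
      _ ≤ ∑ a, (V a (π a) - Vmin a) := by
          apply Finset.sum_le_sum_of_subset_of_nonneg (Finset.subset_univ _)
          intro a _ _
          exact sub_nonneg.2 (hminle a)
  · -- Part 2
    have hβnonneg : ∀ t, 0 ≤ β t := by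
      intro t
      by_cases h : t < p * n + q
      · rw [hβ t h]; exact sub_nonneg.2 (hminmax _)
      · rw [hβ0 t (le_of_not_gt h)]
    -- rewrite the Fin-sum as a range-sum of β
    have hsum1 : ∑ a : Fin (p * n + q), (Vmax a - Vmin a)
        = ∑ t ∈ Finset.range (p * n + q), β t := by
      rw [← Fin.sum_univ_eq_sum_range]
      apply Finset.sum_congr rfl
      intro a _
      rw [hβ a.1 a.2]
    -- extend to a sum over range ((p+1)*n), padding with zeros
    have hsum2 : ∑ t ∈ Finset.range (p * n + q), β t
        = ∑ t ∈ Finset.range ((p + 1) * n), β t := by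
      apply Finset.sum_subset
      · apply Finset.range_subset_range.2
        have : (p + 1) * n = p * n + n := by ring
        omega
      · intro t _ ht
        rw [Finset.mem_range, not_lt] at ht
        exact hβ0 t ht
    -- block decomposition
    have hblocks : ∀ K : ℕ, ∑ t ∈ Finset.range (K * n), β t
        = ∑ k ∈ Finset.range K, ∑ c ∈ Finset.range n, β (k * n + c) := by
      intro K
      induction K with
      | zero => simp
      | succ K ih =>
        have : (K + 1) * n = K * n + n := by ring
        rw [this, Finset.sum_range_add, ih, Finset.sum_range_succ]
    have hblockbound : ∀ k : ℕ, ∑ c ∈ Finset.range n, β (k * n + c) ≤ (n : ℝ) * β (k * n - 1) := by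
      intro k
      calc ∑ c ∈ Finset.range n, β (k * n + c)
          ≤ ∑ _c ∈ Finset.range n, β (k * n - 1) := by
            apply Finset.sum_le_sum
            intro c _
            exact hsorted _ _ (by omega)
        _ = (n : ℝ) * β (k * n - 1) := by
            rw [Finset.sum_const, Finset.card_range, nsmul_eq_mul]
    have hmain : ∑ t ∈ Finset.range ((p + 1) * n), β t
        ≤ (n : ℝ) * (β 0 + ∑ k ∈ Finset.Icc 1 p, β (k * n - 1)) := by
      rw [hblocks (p + 1)]
      calc ∑ k ∈ Finset.range (p + 1), ∑ c ∈ Finset.range n, β (k * n + c)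
          ≤ ∑ k ∈ Finset.range (p + 1), (n : ℝ) * β (k * n - 1) :=
            Finset.sum_le_sum (fun k _ => hblockbound k)
        _ = (n : ℝ) * ∑ k ∈ Finset.range (p + 1), β (k * n - 1) := by
            rw [Finset.mul_sum]
        _ = (n : ℝ) * (β 0 + ∑ k ∈ Finset.Icc 1 p, β (k * n - 1)) := by
            congr 1
            rw [Finset.sum_range_succ' (fun k => β (k * n - 1)) p]
            rw [add_comm]
            congr 1
            · simp
            · have : Finset.Icc 1 p = Finset.Ico 1 (p + 1) := by
                rw [Finset.Ico_add_one_right_eq_Icc]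
              rw [this, Finset.sum_Ico_eq_sum_range]
              simp only [Nat.add_sub_cancel]
              apply Finset.sum_congr rfl
              intro i _
              congr 1
              ring_nf
    rw [hsum1, hsum2]
    have hnpos : (0 : ℝ) < (n : ℝ) := by exact_mod_cast hn
    rw [div_mul_eq_mul_div, one_mul, div_le_iff₀ hnpos]
    calc ∑ t ∈ Finset.range ((p + 1) * n), β t
        ≤ (n : ℝ) * (β 0 + ∑ k ∈ Finset.Icc 1 p, β (k * n - 1)) := hmain
      _ = (β 0 + ∑ k ∈ Finset.Icc 1 p, β (k * n - 1)) * n := by ring
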